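/- arXiv:2405.05681 — 2 statements merged into one kernel-verified Lean document; each statement's English description precedes it below -/
import Mathlib

section
/- Assume g is a nondegenerate symmetric bilinear form on V and J : V → V is linear with J ∘ J = -id_V and g(J X, J Y) = g(X, Y) for all X, Y ∈ V, and define ω(X, Y) := g(J X, Y). Then for any real numbers a, b, c, the endomorphism 𝒥 := a 𝒥_{1,J} + b 𝒥_g + c 𝒥_ω of E satisfies 𝒥 ∘ 𝒥 = -(a² + b² + c²) · id_E. -/
noncomputable section

variable {V : Type*} [AddCommGroup V] [Module ℝ V] [FiniteDimensional ℝ V]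

/-- The endomorphism `𝒥_{λ,J}` of `E = V × V*`, `𝒥_{λ,J}(X,ξ) = (J X, λ J* ξ)`. -/
def Jlam (lam : ℝ) (J : V →ₗ[ℝ] V) (u : V × Module.Dual ℝ V) : V × Module.Dual ℝ V :=
  (J u.1, lam • J.dualMap u.2)

/-- The musical isomorphism `♯_h = (♭_h)⁻¹` of a nondegenerate bilinear form `h`. -/
def sharp (h : LinearMap.BilinForm ℝ V) (hh : LinearMap.BilinForm.Nondegenerate h) :
    Module.Dual ℝ V →ₗ[ℝ] V :=
  (LinearMap.BilinForm.toDual h hh).symm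

/-- The endomorphism `𝒥_h` of `E = V × V*`, `𝒥_h(X,ξ) = (-♯_h ξ, ♭_h X)`. -/
def Jform (h : LinearMap.BilinForm ℝ V) (hh : LinearMap.BilinForm.Nondegenerate h)
    (u : V × Module.Dual ℝ V) : V × Module.Dual ℝ V :=
  (-(sharp h hh u.2), h u.1)

lemma sharp_flat (h : LinearMap.BilinForm ℝ V) (hh : LinearMap.BilinForm.Nondegenerate h)
    (X : V) : sharp h hh (h X) = X := by
  have : h X = LinearMap.BilinForm.toDual h hh X := by
    ext Y; rw [LinearMap.BilinForm.toDual_def]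
  rw [sharp, this]
  exact (LinearMap.BilinForm.toDual h hh).symm_apply_apply X

lemma flat_sharp (h : LinearMap.BilinForm ℝ V) (hh : LinearMap.BilinForm.Nondegenerate h)
    (ξ : Module.Dual ℝ V) : h (sharp h hh ξ) = ξ := by
  ext Y
  exact LinearMap.BilinForm.apply_toDual_symm_apply (hB := hh) (f := ξ) (v := Y)

/-- For an almost Hermitian structure `(g, J)` and `ω = g(J·,·)`, the linear combination
`𝒥 = a 𝒥_{1,J} + b 𝒥_g + c 𝒥_ω` satisfies `𝒥 ∘ 𝒥 = -(a² + b² + c²) id`. -/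
theorem spherical_combination_sq (g : LinearMap.BilinForm ℝ V)
    (hg : LinearMap.BilinForm.Nondegenerate g)
    (hsym : ∀ X Y : V, g X Y = g Y X)
    (J : V →ₗ[ℝ] V) (hJ : ∀ X : V, J (J X) = -X)
    (hcompat : ∀ X Y : V, g (J X) (J Y) = g X Y) (a b c : ℝ) :
    ∃ hω : LinearMap.BilinForm.Nondegenerate (g ∘ₗ J),
      let 𝒥 : (V × Module.Dual ℝ V) → (V × Module.Dual ℝ V) :=
        fun w => a • Jlam 1 J w + b • Jform g hg w + c • Jform (g ∘ₗ J) hω w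
      ∀ u : V × Module.Dual ℝ V, 𝒥 (𝒥 u) = -((a ^ 2 + b ^ 2 + c ^ 2) • u) := by
  -- the key sign identity: g (J X) Y = - g X (J Y)
  have hanti : ∀ X Y : V, g (J X) Y = - g X (J Y) := by
    intro X Y
    have := hcompat X (J Y)
    rw [hJ] at this
    simp only [map_neg, LinearMap.neg_apply] at this
    linarith [this]
  have hω : LinearMap.BilinForm.Nondegenerate (g ∘ₗ J) := by
    refine ⟨fun X hX => ?_, fun Y hY => ?_⟩
    · have hJX : J X = 0 := hg.1 (J X) (by intro Y; exact hX Y)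
      have := hJ X
      rw [hJX, map_zero] at this
      simpa using this.symm
    · have hJY : J Y = 0 := hg.2 (J Y) (by
        intro X; have := hY X; simp only [LinearMap.comp_apply] at this
        rw [hanti] at this; linarith)
      have := hJ Y
      rw [hJY, map_zero] at this
      simpa using this.symm
  refine ⟨hω, ?_⟩
  intro 𝒥 u
  obtain ⟨X, ξ⟩ := u
  set s : Module.Dual ℝ V →ₗ[ℝ] V := sharp g hg with hs
  -- sharp of ω in terms of sharp of g
  have sharpω : ∀ ζ : Module.Dual ℝ V, sharp (g ∘ₗ J) hω ζ = -(J (s ζ)) := by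
    intro ζ
    have h1 : (g ∘ₗ J) (-(J (s ζ))) = ζ := by
      ext Y
      simp only [LinearMap.comp_apply, map_neg, hJ, LinearMap.neg_apply, neg_neg,
        map_neg, LinearMap.BilinForm.neg_apply]
      have := flat_sharp g hg ζ
      calc g (s ζ) Y = (g (s ζ)) Y := rfl
        _ = ζ Y := by rw [this]
    calc sharp (g ∘ₗ J) hω ζ = sharp (g ∘ₗ J) hω ((g ∘ₗ J) (-(J (s ζ)))) := by rw [h1]
      _ = -(J (s ζ)) := sharp_flat _ _ _
  -- dualMap identities
  have dualflat : ∀ X : V, J.dualMap (g X) = -(g (J X)) := by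
    intro X; ext Y
    simp only [LinearMap.dualMap_apply, LinearMap.neg_apply]
    rw [hanti X Y]; ring
  have dualflat' : ∀ X : V, J.dualMap (g (J X)) = g X := by
    intro X; ext Y
    simp only [LinearMap.dualMap_apply]
    exact hcompat X Y
  have sdual : ∀ ζ : Module.Dual ℝ V, s (J.dualMap ζ) = -(J (s ζ)) := by
    intro ζ
    have h1 : g (-(J (s ζ))) = J.dualMap ζ := by
      ext Y
      simp only [map_neg, LinearMap.neg_apply, LinearMap.dualMap_apply]
      rw [hanti (s ζ) Y]
      simp only [neg_neg]
      -- need : -(- g (s ζ) (J Y)) = ζ (J Y)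
      have := flat_sharp g hg ζ
      calc g (s ζ) (J Y) = (g (s ζ)) (J Y) := rfl
        _ = ζ (J Y) := by rw [this]
    rw [← h1, sharp_flat]
  have flatJs : ∀ ζ : Module.Dual ℝ V, g (s (J.dualMap ζ)) = J.dualMap ζ :=
    fun ζ => flat_sharp g hg _
  -- now expand
  simp only [𝒥, Jlam, Jform, sharpω, Prod.smul_mk, Prod.mk_add_mk, one_smul,
    Prod.fst_add, Prod.snd_add, Prod.smul_fst, Prod.smul_snd, smul_neg,
    LinearMap.comp_apply]
  refine Prod.ext ?_ ?_
  · -- first component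
    simp only [map_add, map_smul, map_neg, sdual, sharpω, sharp_flat, hJ,
      LinearMap.BilinForm.toDual_def]
    have sflat : s (g X) = X := sharp_flat g hg X
    have sflatJ : s (g (J X)) = J X := sharp_flat g hg (J X)
    simp only [sflat, sflatJ, map_neg, hJ, map_smul, map_add, neg_neg, ← hs,
      Prod.fst_neg, Prod.snd_neg]
    rw [sdual]
    module
  · -- second component
    simp only [map_add, map_smul, map_neg, dualflat, dualflat']
    have dd : ∀ ζ : Module.Dual ℝ V, J.dualMap (J.dualMap ζ) = -ζ := by
      intro ζ; ext Y; simp [LinearMap.dualMap_apply, hJ]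
    have f1 : g (s ξ) = ξ := flat_sharp g hg ξ
    simp only [dd, f1, map_neg, map_smul, map_add, flat_sharp]
    have f2 : g (J (J (s ξ))) = -ξ := by rw [hJ]; simp [f1]
    have f3 : g (J (s ξ)) = -(J.dualMap ξ) := by
      ext Y; simp only [LinearMap.neg_apply, LinearMap.dualMap_apply]
      rw [hanti (s ξ) Y]
      have : g (s ξ) (J Y) = ξ (J Y) := by rw [f1]
      rw [this]
    simp only [f1, f2, f3, neg_neg, hJ, map_neg, Prod.fst_neg, Prod.snd_neg]
    rw [show sharp g hg ξ = s ξ from rfl, f3]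
    module

end
end

section
/- Assume g is a nondegenerate symmetric bilinear form on V and J : V → V is linear with J ∘ J = -id_V and g(J X, J Y) = g(X, Y) for all X, Y ∈ V. Then the endomorphism 𝒥 of E defined by 𝒥(X, ξ) := (J X + ♯_g ξ, J* ξ) satisfies 𝒥 ∘ 𝒥 = -id_E and G₀(𝒥 u, 𝒥 v) = -G₀(u, v) for all u, v ∈ E; in particular, if V ≠ 0, 𝒥 is a weak generalized complex operator that is not strong. -/
noncomputable section

variable {V : Type*} [AddCommGroup V] [Module ℝ V] [FiniteDimensional ℝ V]

/-- The canonical pairing `G₀` on `E = V × V*`. -/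
def Gz (u v : V × Module.Dual ℝ V) : ℝ := (u.2 v.1 + v.2 u.1) / 2

lemma sharp_spec (h : LinearMap.BilinForm ℝ V) (hh : LinearMap.BilinForm.Nondegenerate h)
    (ξ : Module.Dual ℝ V) (Y : V) : h (sharp h hh ξ) Y = ξ Y := by
  have := (LinearMap.BilinForm.toDual h hh).apply_symm_apply ξ
  have h2 := congrArg (fun f => f Y) this
  simpa [LinearMap.BilinForm.toDual_def, sharp] using h2

/-- For an almost Hermitian structure `(g, J)`, the endomorphism
`𝒥(X,ξ) = (J X + ♯_g ξ, J* ξ)` squares to `-id` and satisfies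
`G₀(𝒥u, 𝒥v) = -G₀(u,v)`; in particular, if `V ≠ 0` it is a weak generalized
complex operator which is not strong. -/
theorem upper_triangular_weak_not_strong (g : LinearMap.BilinForm ℝ V)
    (hg : LinearMap.BilinForm.Nondegenerate g)
    (hsym : ∀ X Y : V, g X Y = g Y X)
    (J : V →ₗ[ℝ] V) (hJ : ∀ X : V, J (J X) = -X)
    (hcompat : ∀ X Y : V, g (J X) (J Y) = g X Y) :
    let 𝒥 : (V × Module.Dual ℝ V) → (V × Module.Dual ℝ V) :=
      fun u => (J u.1 + sharp g hg u.2, J.dualMap u.2)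
    (∀ u : V × Module.Dual ℝ V, 𝒥 (𝒥 u) = -u) ∧
    (∀ u v : V × Module.Dual ℝ V, Gz (𝒥 u) (𝒥 v) = -Gz u v) ∧
    (Nontrivial V →
      ¬ (∀ u v : V × Module.Dual ℝ V, Gz (𝒥 u) v = -Gz u (𝒥 v))) := by
  intro 𝒥
  -- key: ♯(J*ξ) = -J(♯ξ)
  have key : ∀ ξ : Module.Dual ℝ V, sharp g hg (J.dualMap ξ) = -J (sharp g hg ξ) := by
    intro ξ
    rw [← sub_eq_zero]
    apply hg.1
    intro Y
    rw [map_sub, LinearMap.sub_apply, sharp_spec]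
    have : g (J (sharp g hg ξ)) Y = - ξ (J Y) := by
      have h1 : g (J (sharp g hg ξ)) (J (J Y)) = g (sharp g hg ξ) (J Y) := hcompat _ _
      rw [hJ, map_neg] at h1
      rw [sharp_spec] at h1
      simpa using (congrArg Neg.neg h1.symm).symm
    simp [this, LinearMap.dualMap_apply]
  have hgJ : ∀ A B : V, g A (J B) = - g (J A) B := by
    intro A B
    have := hcompat A (J B)
    rw [hJ] at this
    simp only [map_neg, LinearMap.neg_apply] at this
    linarith [this]
  refine ⟨?_, ?_, ?_⟩
  · intro u
    simp only [𝒥, key, Prod.ext_iff]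
    constructor
    · simp [hJ]
    · ext Y
      simp [LinearMap.dualMap_apply, hJ]
  · intro u v
    obtain ⟨X, ξ⟩ := u
    obtain ⟨Y, η⟩ := v
    simp only [𝒥, Gz, LinearMap.dualMap_apply]
    have e1 : ξ (J Y) = g (sharp g hg ξ) (J Y) := (sharp_spec g hg ξ _).symm
    have e2 : η (J X) = g (sharp g hg η) (J X) := (sharp_spec g hg η _).symm
    have e3 : ξ (J (sharp g hg η)) = g (sharp g hg ξ) (J (sharp g hg η)) :=
      (sharp_spec g hg ξ _).symm
    have e4 : η (J (sharp g hg ξ)) = g (sharp g hg η) (J (sharp g hg ξ)) :=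
      (sharp_spec g hg η _).symm
    have e5 : ξ (J (J Y)) = - ξ Y := by rw [hJ]; simp
    have e6 : η (J (J X)) = - η X := by rw [hJ]; simp
    simp only [map_add, LinearMap.add_apply]
    rw [e5, e6]
    have cancel : ξ (J (sharp g hg η)) + η (J (sharp g hg ξ)) = 0 := by
      rw [e3, e4, hgJ, hsym (J (sharp g hg ξ)) (sharp g hg η)]
      ring
    linarith [cancel]
  · intro hnt hstrong
    -- then Gz u v = 0 for all u v
    have hsq : ∀ u, 𝒥 (𝒥 u) = -u := by
      intro u
      simp only [𝒥, key, Prod.ext_iff]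
      constructor
      · simp [hJ]
      · ext Y; simp [LinearMap.dualMap_apply, hJ]
    have hzero : ∀ u v : V × Module.Dual ℝ V, Gz u v = 0 := by
      intro u v
      have h1 : Gz (𝒥 u) (𝒥 v) = -Gz u v := by
        obtain ⟨X, ξ⟩ := u
        obtain ⟨Y, η⟩ := v
        simp only [𝒥, Gz, LinearMap.dualMap_apply]
        have e3 : ξ (J (sharp g hg η)) = g (sharp g hg ξ) (J (sharp g hg η)) :=
          (sharp_spec g hg ξ _).symm
        have e4 : η (J (sharp g hg ξ)) = g (sharp g hg η) (J (sharp g hg ξ)) :=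
          (sharp_spec g hg η _).symm
        have e5 : ξ (J (J Y)) = - ξ Y := by rw [hJ]; simp
        have e6 : η (J (J X)) = - η X := by rw [hJ]; simp
        simp only [map_add, LinearMap.add_apply]
        rw [e5, e6]
        have cancel : ξ (J (sharp g hg η)) + η (J (sharp g hg ξ)) = 0 := by
          rw [e3, e4, hgJ, hsym (J (sharp g hg ξ)) (sharp g hg η)]
          ring
        linarith [cancel]
      have h2 : Gz (𝒥 u) (𝒥 v) = -Gz u (𝒥 (𝒥 v)) := hstrong u (𝒥 v)
      rw [hsq v] at h2
      have h3 : Gz u (-v) = -Gz u v := by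
        obtain ⟨X, ξ⟩ := u; obtain ⟨Y, η⟩ := v
        simp [Gz]; ring
      rw [h3] at h2
      have : -Gz u v = Gz u v := by rw [← h1, h2]; ring
      linarith
    obtain ⟨X, hX⟩ := exists_ne (0 : V)
    obtain ⟨Y, hY⟩ : ∃ Y, g X Y ≠ 0 := by
      by_contra hc
      push_neg at hc
      exact hX (hg.1 X (by simpa using hc))
    have := hzero (Y, 0) (0, g X)
    simp [Gz] at this
    exact hY this

end
end
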